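/- Let e(n,i) and f(n,i) count ballotlike paths from (0,0) to (n,i) with no down step and with at least one down step, respectively. Then for n > i ≥ 1, f(n,i) = f(n-1,i-1) + 2*f(n-1,i) + f(n-1,i+1) + e(n-1,i+1), and for n ≥ 2, f(n,0) = f(n-1,0) + f(n-1,1) + e(n-1,1). -/

import Mathlib

inductive BStep : Type
  | U | D | Hu | Hd
deriving DecidableEq

def BStep.h : BStep → ℤ
  | .U => 1
  | .D => -1
  | .Hu => 0
  | .Hd => 0

/-- The height reached by a path (list of steps). -/
def hsum (p : List BStep) : ℤ := (p.map BStep.h).sum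

/-- The path never goes below the x-axis. -/
def NonNegPath (p : List BStep) : Prop := ∀ k : ℕ, 0 ≤ hsum (p.take k)

/-- Restriction (1): no umber horizontal step occurs at height zero. -/
def Res1 (p : List BStep) : Prop :=
  ∀ (i : ℕ) (hi : i < p.length), p.get ⟨i, hi⟩ = BStep.Hu → 0 < hsum (p.take i)

/-- Restriction (2): no denim horizontal step occurs before the first down step. -/
def Res2 (p : List BStep) : Prop :=
  ∀ (i : ℕ) (hi : i < p.length), p.get ⟨i, hi⟩ = BStep.Hd →
    ∃ (j : ℕ) (hj : j < p.length), j < i ∧ p.get ⟨j, hj⟩ = BStep.D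

/-- A bicolored Motzkin path of length `n`: from (0,0) to (n,0), never below the x-axis. -/
def IsBMotzkin (n : ℕ) (p : List BStep) : Prop :=
  p.length = n ∧ hsum p = 0 ∧ NonNegPath p

/-- A ballotlike path: stays weakly above the x-axis, umber horizontal steps
never at height zero, denim horizontal steps never before the first down step. -/
def Ballotlike (p : List BStep) : Prop := NonNegPath p ∧ Res1 p ∧ Res2 p

/-- Binomial coefficient for integer arguments; zero for negative/out-of-range arguments. -/
def zchoose (m j : ℤ) : ℤ :=
  if 0 ≤ m ∧ 0 ≤ j then (Nat.choose m.toNat j.toNat : ℤ) else 0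

/-- `eCount n i` : ballotlike paths from (0,0) to (n,i) with no down step. -/
noncomputable def eCount (n i : ℕ) : ℕ :=
  Nat.card {p : List BStep // p.length = n ∧ Ballotlike p ∧ hsum p = (i : ℤ) ∧ BStep.D ∉ p}

/-- `fCount n i` : ballotlike paths from (0,0) to (n,i) with at least one down step. -/
noncomputable def fCount (n i : ℕ) : ℕ :=
  Nat.card {p : List BStep // p.length = n ∧ Ballotlike p ∧ hsum p = (i : ℤ) ∧ BStep.D ∈ p}

instance : Fintype BStep := ⟨{.U, .D, .Hu, .Hd}, by intro x; cases x <;> simp⟩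

lemma hsum_concat (q : List BStep) (s : BStep) : hsum (q ++ [s]) = hsum q + s.h := by
  simp [hsum]

lemma take_concat_of_le {q : List BStep} {s : BStep} {k : ℕ} (h : k ≤ q.length) :
    (q ++ [s]).take k = q.take k := by
  rw [List.take_append, Nat.sub_eq_zero_of_le h]; simp

lemma nonneg_concat (q : List BStep) (s : BStep) :
    NonNegPath (q ++ [s]) ↔ NonNegPath q ∧ 0 ≤ hsum q + s.h := by
  constructor
  · intro H
    refine ⟨fun k => ?_, ?_⟩
    · by_cases h : k ≤ q.length
      · have := H k
        rwa [take_concat_of_le h] at this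
      · have := H q.length
        rw [take_concat_of_le le_rfl, List.take_length] at this
        rwa [List.take_of_length_le (by omega)]
    · have := H (q.length + 1)
      rwa [List.take_of_length_le (by simp), hsum_concat] at this
  · rintro ⟨H, h0⟩ k
    by_cases h : k ≤ q.length
    · rw [take_concat_of_le h]
      exact H k
    · rw [List.take_of_length_le (by simp; omega), hsum_concat]
      exact h0

lemma hsum_nonneg_of_nonneg {q : List BStep} (H : NonNegPath q) : 0 ≤ hsum q := by
  have := H q.length
  rwa [List.take_length] at this

lemma res1_concat (q : List BStep) (s : BStep) :
    Res1 (q ++ [s]) ↔ Res1 q ∧ (s = .Hu → 0 < hsum q) := by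
  constructor
  · intro H
    refine ⟨fun i hi h => ?_, fun hs => ?_⟩
    · have hi' : i < (q ++ [s]).length := by simp; omega
      have h' : (q ++ [s]).get ⟨i, hi'⟩ = BStep.Hu := by
        simp only [List.get_eq_getElem] at h ⊢
        rwa [List.getElem_append_left hi]
      have := H i hi' h'
      rwa [take_concat_of_le (le_of_lt hi)] at this
    · have hi' : q.length < (q ++ [s]).length := by simp
      have h' : (q ++ [s]).get ⟨q.length, hi'⟩ = BStep.Hu := by
        simp only [List.get_eq_getElem]
        rw [List.getElem_concat_length (l := q) (a := s) (i := q.length) rfl]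
        exact hs
      have := H q.length hi' h'
      rwa [take_concat_of_le le_rfl, List.take_length] at this
  · rintro ⟨H, H0⟩ i hi h
    simp only [List.get_eq_getElem] at h
    have hle : i ≤ q.length := by have := hi; simp at this; omega
    rcases lt_or_eq_of_le hle with hlt | heq
    · rw [List.getElem_append_left hlt] at h
      rw [take_concat_of_le (le_of_lt hlt)]
      exact H i hlt (by simpa using h)
    · subst heq
      rw [List.getElem_concat_length (l := q) (a := s) rfl] at h
      rw [take_concat_of_le le_rfl, List.take_length]
      exact H0 h

lemma res2_concat (q : List BStep) (s : BStep) :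
    Res2 (q ++ [s]) ↔ Res2 q ∧ (s = .Hd → BStep.D ∈ q) := by
  constructor
  · intro H
    refine ⟨fun i hi h => ?_, fun hs => ?_⟩
    · have hi' : i < (q ++ [s]).length := by simp; omega
      have h' : (q ++ [s]).get ⟨i, hi'⟩ = BStep.Hd := by
        simp only [List.get_eq_getElem] at h ⊢
        rwa [List.getElem_append_left hi]
      obtain ⟨j, hj, hji, hD⟩ := H i hi' h'
      have hjq : j < q.length := lt_trans hji hi
      refine ⟨j, hjq, hji, ?_⟩
      simp only [List.get_eq_getElem] at hD ⊢
      rwa [List.getElem_append_left hjq] at hD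
    · have hi' : q.length < (q ++ [s]).length := by simp
      have h' : (q ++ [s]).get ⟨q.length, hi'⟩ = BStep.Hd := by
        simp only [List.get_eq_getElem]
        rw [List.getElem_concat_length (l := q) (a := s) (i := q.length) rfl]
        exact hs
      obtain ⟨j, hj, hji, hD⟩ := H q.length hi' h'
      have hjq : j < q.length := hji
      rw [List.mem_iff_getElem]
      refine ⟨j, hjq, ?_⟩
      simp only [List.get_eq_getElem] at hD
      rwa [List.getElem_append_left hjq] at hD
  · rintro ⟨H, H0⟩ i hi h
    simp only [List.get_eq_getElem] at h
    have hle : i ≤ q.length := by have := hi; simp at this; omega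
    rcases lt_or_eq_of_le hle with hlt | heq
    · rw [List.getElem_append_left hlt] at h
      obtain ⟨j, hj, hji, hD⟩ := H i hlt (by simpa using h)
      have hjp : j < (q ++ [s]).length := by simp; omega
      refine ⟨j, hjp, hji, ?_⟩
      simp only [List.get_eq_getElem] at hD ⊢
      rwa [List.getElem_append_left hj]
    · subst heq
      rw [List.getElem_concat_length (l := q) (a := s) rfl] at h
      obtain ⟨j, hj, hD⟩ := List.mem_iff_getElem.mp (H0 h)
      have hjp : j < (q ++ [s]).length := by simp; omega
      refine ⟨j, hjp, hj, ?_⟩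
      simp only [List.get_eq_getElem]
      rwa [List.getElem_append_left hj]

lemma ballot_concat (q : List BStep) (s : BStep) :
    Ballotlike (q ++ [s]) ↔
      Ballotlike q ∧ 0 ≤ hsum q + s.h ∧ (s = .Hu → 0 < hsum q) ∧ (s = .Hd → BStep.D ∈ q) := by
  unfold Ballotlike
  rw [nonneg_concat, res1_concat, res2_concat]
  tauto

def Fset (n : ℕ) (i : ℤ) : Set (List BStep) :=
  {p | p.length = n ∧ Ballotlike p ∧ hsum p = i ∧ BStep.D ∈ p}

def Eset (n : ℕ) (i : ℤ) : Set (List BStep) :=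
  {p | p.length = n ∧ Ballotlike p ∧ hsum p = i ∧ BStep.D ∉ p}

lemma fCount_eq (n i : ℕ) : fCount n i = (Fset n i).ncard :=
  Nat.card_coe_set_eq (Fset n (i : ℤ))

lemma eCount_eq (n i : ℕ) : eCount n i = (Eset n i).ncard :=
  Nat.card_coe_set_eq (Eset n (i : ℤ))

lemma Fset_finite (n : ℕ) (i : ℤ) : (Fset n i).Finite :=
  (List.finite_length_eq BStep n).subset (fun _ hp => hp.1)

lemma Eset_finite (n : ℕ) (i : ℤ) : (Eset n i).Finite :=
  (List.finite_length_eq BStep n).subset (fun _ hp => hp.1)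

lemma mem_Fset_concat {n : ℕ} {i : ℤ} {q : List BStep} {s : BStep} :
    q ++ [s] ∈ Fset (n + 1) i ↔
      q.length = n ∧ Ballotlike q ∧ 0 ≤ i ∧ hsum q + s.h = i ∧
      (s = .Hu → 0 < hsum q) ∧ (s = .Hd → BStep.D ∈ q) ∧ (BStep.D ∈ q ∨ s = BStep.D) := by
  simp only [Fset, Set.mem_setOf_eq, ballot_concat, hsum_concat, List.length_append,
    List.length_singleton, List.mem_append, List.mem_singleton]
  constructor
  · rintro ⟨hl, ⟨hb, h0, h1, h2⟩, hs, hD⟩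
    exact ⟨by omega, hb, by omega, hs, h1, h2, hD.imp id (fun h => h.symm)⟩
  · rintro ⟨hl, hb, hi, hs, h1, h2, hD⟩
    exact ⟨by omega, ⟨hb, by omega, h1, h2⟩, hs, hD.imp id (fun h => h.symm)⟩

lemma exists_concat {p : List BStep} (h : p ≠ []) : ∃ q s, p = q ++ [s] :=
  ⟨p.dropLast, p.getLast h, (List.dropLast_concat_getLast h).symm⟩

lemma Fset_decomp_pos (n : ℕ) (i : ℤ) (hi : 1 ≤ i) :
    Fset (n + 1) i =
      (fun q => q ++ [BStep.U]) '' Fset n (i - 1) ∪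
      (fun q => q ++ [BStep.Hu]) '' Fset n i ∪
      (fun q => q ++ [BStep.Hd]) '' Fset n i ∪
      (fun q => q ++ [BStep.D]) '' Fset n (i + 1) ∪
      (fun q => q ++ [BStep.D]) '' Eset n (i + 1) := by
  ext p
  constructor
  · intro hp
    have hne : p ≠ [] := by
      intro h; have := hp.1; simp [h] at this
    obtain ⟨q, s, rfl⟩ := exists_concat hne
    rw [mem_Fset_concat] at hp
    obtain ⟨hl, hb, h0, hs, h1, h2, hD⟩ := hp
    cases s with
    | U =>
      have hDq : BStep.D ∈ q := hD.resolve_right (by simp)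
      exact Or.inl (Or.inl (Or.inl (Or.inl ⟨q, ⟨hl, hb, by simp [BStep.h] at hs; omega, hDq⟩, rfl⟩)))
    | Hu =>
      have hDq : BStep.D ∈ q := hD.resolve_right (by simp)
      exact Or.inl (Or.inl (Or.inl (Or.inr ⟨q, ⟨hl, hb, by simp [BStep.h] at hs; omega, hDq⟩, rfl⟩)))
    | Hd =>
      exact Or.inl (Or.inl (Or.inr ⟨q, ⟨hl, hb, by simp [BStep.h] at hs; omega, h2 rfl⟩, rfl⟩))
    | D =>
      by_cases hDq : BStep.D ∈ q
      · exact Or.inl (Or.inr ⟨q, ⟨hl, hb, by simp [BStep.h] at hs; omega, hDq⟩, rfl⟩)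
      · exact Or.inr ⟨q, ⟨hl, hb, by simp [BStep.h] at hs; omega, hDq⟩, rfl⟩
  · rintro ((((⟨q, ⟨hl, hb, hs, hD⟩, rfl⟩ | ⟨q, ⟨hl, hb, hs, hD⟩, rfl⟩) |
      ⟨q, ⟨hl, hb, hs, hD⟩, rfl⟩) | ⟨q, ⟨hl, hb, hs, hD⟩, rfl⟩) |
      ⟨q, ⟨hl, hb, hs, hD⟩, rfl⟩) <;>
    rw [mem_Fset_concat] <;>
    refine ⟨hl, hb, by omega, by simp [BStep.h]; omega, ?_, ?_, ?_⟩ <;>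
    simp_all <;> omega

lemma Fset_decomp_zero (n : ℕ) :
    Fset (n + 1) 0 =
      (fun q => q ++ [BStep.Hd]) '' Fset n 0 ∪
      (fun q => q ++ [BStep.D]) '' Fset n 1 ∪
      (fun q => q ++ [BStep.D]) '' Eset n 1 := by
  ext p
  constructor
  · intro hp
    have hne : p ≠ [] := by
      intro h; have := hp.1; simp [h] at this
    obtain ⟨q, s, rfl⟩ := exists_concat hne
    rw [mem_Fset_concat] at hp
    obtain ⟨hl, hb, h0, hs, h1, h2, hD⟩ := hp
    cases s with
    | U =>
      exfalso
      have := hsum_nonneg_of_nonneg hb.1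
      simp [BStep.h] at hs; omega
    | Hu =>
      exfalso
      have := h1 rfl
      simp [BStep.h] at hs; omega
    | Hd =>
      exact Or.inl (Or.inl ⟨q, ⟨hl, hb, by simp [BStep.h] at hs; omega, h2 rfl⟩, rfl⟩)
    | D =>
      by_cases hDq : BStep.D ∈ q
      · exact Or.inl (Or.inr ⟨q, ⟨hl, hb, by simp [BStep.h] at hs; omega, hDq⟩, rfl⟩)
      · exact Or.inr ⟨q, ⟨hl, hb, by simp [BStep.h] at hs; omega, hDq⟩, rfl⟩
  · rintro ((⟨q, ⟨hl, hb, hs, hD⟩, rfl⟩ | ⟨q, ⟨hl, hb, hs, hD⟩, rfl⟩) |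
      ⟨q, ⟨hl, hb, hs, hD⟩, rfl⟩) <;>
    rw [mem_Fset_concat] <;>
    refine ⟨hl, hb, le_refl 0, by simp [BStep.h]; omega, ?_, ?_, ?_⟩ <;>
    simp_all <;> omega

lemma disj_steps {s t : BStep} (h : s ≠ t) (A B : Set (List BStep)) :
    Disjoint ((fun q => q ++ [s]) '' A) ((fun q => q ++ [t]) '' B) := by
  rw [Set.disjoint_left]
  rintro p ⟨q, _, rfl⟩ ⟨r, _, he⟩
  simp only [← List.concat_eq_append] at he
  exact h ((List.concat_inj.mp he).2.symm)

lemma disj_FE (n : ℕ) (i : ℤ) (s : BStep) :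
    Disjoint ((fun q => q ++ [s]) '' Fset n i) ((fun q => q ++ [s]) '' Eset n i) := by
  rw [Set.disjoint_left]
  rintro p ⟨q, hq, rfl⟩ ⟨r, hr, he⟩
  simp only [← List.concat_eq_append] at he
  obtain ⟨rfl, -⟩ := List.concat_inj.mp he
  exact hr.2.2.2 hq.2.2.2

lemma ncard_image (A : Set (List BStep)) (s : BStep) :
    ((fun q => q ++ [s]) '' A).ncard = A.ncard :=
  Set.ncard_image_of_injective A (List.append_left_injective [s])

theorem fCount_recurrences :
    (∀ n i : ℕ, 1 ≤ i → i < n →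
      fCount n i = fCount (n - 1) (i - 1) + 2 * fCount (n - 1) i
        + fCount (n - 1) (i + 1) + eCount (n - 1) (i + 1)) ∧
    (∀ n : ℕ, 2 ≤ n →
      fCount n 0 = fCount (n - 1) 0 + fCount (n - 1) 1 + eCount (n - 1) 1) := by
  constructor
  · intro n i h1 h2
    obtain ⟨m, rfl⟩ : ∃ m, n = m + 1 := ⟨n - 1, by omega⟩
    obtain ⟨j, rfl⟩ : ∃ j, i = j + 1 := ⟨i - 1, by omega⟩
    simp only [Nat.add_sub_cancel]
    rw [fCount_eq, fCount_eq, fCount_eq, fCount_eq, eCount_eq]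
    have hcast : ((j + 1 : ℕ) : ℤ) = (j : ℤ) + 1 := by push_cast; ring
    rw [hcast]
    rw [Fset_decomp_pos m ((j : ℤ) + 1) (by omega)]
    have f1 := (Fset_finite m ((j:ℤ))).image (fun q => q ++ [BStep.U])
    have f2 := (Fset_finite m ((j:ℤ)+1)).image (fun q => q ++ [BStep.Hu])
    have f3 := (Fset_finite m ((j:ℤ)+1)).image (fun q => q ++ [BStep.Hd])
    have f4 := (Fset_finite m ((j:ℤ)+2)).image (fun q => q ++ [BStep.D])
    have f5 := (Eset_finite m ((j:ℤ)+2)).image (fun q => q ++ [BStep.D])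
    have e1 : (j:ℤ) + 1 - 1 = (j:ℤ) := by ring
    have e2 : (j:ℤ) + 1 + 1 = (j:ℤ) + 2 := by ring
    rw [e1, e2]
    rw [Set.ncard_union_eq (by
        refine Disjoint.union_left (Disjoint.union_left (Disjoint.union_left ?_ ?_) ?_) ?_ <;>
        first
          | exact disj_steps (by decide) _ _
          | exact disj_FE m ((j:ℤ)+2) BStep.D)
      (((f1.union f2).union f3).union f4) f5]
    rw [Set.ncard_union_eq (by
        refine Disjoint.union_left (Disjoint.union_left ?_ ?_) ?_ <;>
        exact disj_steps (by decide) _ _) ((f1.union f2).union f3) f4]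
    rw [Set.ncard_union_eq (by
        refine Disjoint.union_left ?_ ?_ <;> exact disj_steps (by decide) _ _) (f1.union f2) f3]
    rw [Set.ncard_union_eq (disj_steps (by decide) _ _) f1 f2]
    rw [ncard_image, ncard_image, ncard_image, ncard_image, ncard_image]
    have c1 : ((j + 1 + 1 : ℕ) : ℤ) = (j : ℤ) + 2 := by push_cast; ring
    rw [c1]
    ring
  · intro n hn
    obtain ⟨m, rfl⟩ : ∃ m, n = m + 1 := ⟨n - 1, by omega⟩
    simp only [Nat.add_sub_cancel]
    rw [fCount_eq, fCount_eq, fCount_eq, eCount_eq]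
    have : ((0 : ℕ) : ℤ) = 0 := rfl
    rw [this, Fset_decomp_zero m]
    have f1 := (Fset_finite m 0).image (fun q => q ++ [BStep.Hd])
    have f2 := (Fset_finite m 1).image (fun q => q ++ [BStep.D])
    have f3 := (Eset_finite m 1).image (fun q => q ++ [BStep.D])
    rw [Set.ncard_union_eq (by
        refine Disjoint.union_left ?_ ?_
        · exact disj_steps (by decide) _ _
        · exact disj_FE m 1 BStep.D) (f1.union f2) f3]
    rw [Set.ncard_union_eq (disj_steps (by decide) _ _) f1 f2]
    rw [ncard_image, ncard_image, ncard_image]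
    norm_num
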